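/- Let $\{A_i\}_{i\in I}$ be a filtered direct system of commutative rings with direct limit $A$, and let $u_i : A_i \to A$ denote the canonical ring homomorphisms. If $E$ is a finitely presented $A$-module, then there exists an index $i_0 \in I$ and a finitely presented $A_{i_0}$-module $E_{i_0}$ such that the base change $A \otimes_{A_{i_0}} E_{i_0}$ (along $u_{i_0}$) is isomorphic to $E$ as an $A$-module. -/

import Mathlib

set_option maxHeartbeats 1000000
set_option synthInstance.maxHeartbeats 400000


open TensorProduct

section Aux
open Function Submodule LinearMap


lemma aux_baseChange_quotient {R B : Type} [CommRing R] [CommRing B] [Algebra R B]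
    {n s : ℕ} (v : Fin s → (Fin n → R))
    (E : Type) [AddCommGroup E] [Module B E] [Module R E] [IsScalarTower R B E]
    (π : (Fin n → B) →ₗ[B] E) (hπ : Function.Surjective π)
    (hker : LinearMap.ker π = Submodule.span B
      (Set.range (fun k j => algebraMap R B (v k j)))) :
    Nonempty ((B ⊗[R] ((Fin n → R) ⧸ Submodule.span R (Set.range v))) ≃ₗ[B] E) := by
  classical
  let K₀ : Submodule R (Fin n → R) := Submodule.span R (Set.range v)
  have hK₀ : K₀ = Submodule.span R (Set.range v) := rfl
  let ρ : (Fin n → R) →ₗ[R] (Fin n → B) :=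
    { toFun := fun x j => algebraMap R B (x j)
      map_add' := fun x y => funext fun j => by simp
      map_smul' := fun r x => funext fun j => by simp [Algebra.smul_def] }
  let g : (Fin n → R) →ₗ[R] E := (π.restrictScalars R).comp ρ
  have hvmem : ∀ k, ρ (v k) ∈ LinearMap.ker π := fun k =>
    hker ▸ Submodule.subset_span ⟨k, rfl⟩
  have hle : K₀ ≤ LinearMap.ker g := by
    rw [hK₀, Submodule.span_le]
    rintro _ ⟨k, rfl⟩
    show g (v k) = 0
    exact hvmem k
  let gbar := K₀.liftQ g hle
  let φ : B ⊗[R] ((Fin n → R) ⧸ K₀) →ₗ[B] E := gbar.liftBaseChange B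
  let ψ' : (Fin n → B) →ₗ[B] B ⊗[R] ((Fin n → R) ⧸ K₀) :=
    ∑ j, (LinearMap.toSpanSingleton B _ ((1:B) ⊗ₜ[R] K₀.mkQ (Pi.single j 1))).comp
      (LinearMap.proj j)
  have hψ'apply : ∀ y : Fin n → B,
      ψ' y = ∑ j, y j • ((1:B) ⊗ₜ[R] K₀.mkQ (Pi.single j 1)) := fun y => by
    simp [ψ']
  have hs1 : ∀ (j : Fin n) (c : R), c • (Pi.single j (1:R) : Fin n → R) = Pi.single j c :=
    fun j c => by rw [← Pi.single_smul, smul_eq_mul, mul_one]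
  have hsB : ∀ (j : Fin n) (c : B), c • (Pi.single j (1:B) : Fin n → B) = Pi.single j c :=
    fun j c => by rw [← Pi.single_smul, smul_eq_mul, mul_one]
  have hsingle : ∀ x : Fin n → R, (∑ j, x j • (Pi.single j (1:R) : Fin n → R)) = x :=
    fun x => by simp_rw [hs1, Finset.univ_sum_single]
  have hψ'ρ : ∀ x : Fin n → R, ψ' (ρ x) = (1:B) ⊗ₜ[R] K₀.mkQ x := fun x => by
    rw [hψ'apply]
    have : ∀ j, (ρ x) j • ((1:B) ⊗ₜ[R] K₀.mkQ (Pi.single j 1))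
        = (1:B) ⊗ₜ[R] K₀.mkQ (x j • (Pi.single j (1:R) : Fin n → R)) := fun j => by
      show algebraMap R B (x j) • _ = _
      rw [algebraMap_smul, map_smul, tmul_smul]
    simp_rw [this, ← TensorProduct.tmul_sum, ← map_sum, hsingle]
  have hker' : LinearMap.ker π ≤ LinearMap.ker ψ' := by
    rw [hker, Submodule.span_le]
    rintro _ ⟨k, rfl⟩
    have hz : K₀.mkQ (v k) = 0 :=
      (Submodule.Quotient.mk_eq_zero K₀).mpr (Submodule.subset_span ⟨k, rfl⟩)
    have h0 : ψ' (ρ (v k)) = 0 := by rw [hψ'ρ, hz, tmul_zero]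
    exact h0
  let e := LinearMap.quotKerEquivOfSurjective π hπ
  let ψ : E →ₗ[B] B ⊗[R] ((Fin n → R) ⧸ K₀) :=
    ((LinearMap.ker π).liftQ ψ' hker').comp e.symm.toLinearMap
  have he : ∀ x, e (Submodule.Quotient.mk x) = π x := fun x => rfl
  have hψπ : ∀ x, ψ (π x) = ψ' x := fun x => by
    have h1 : e.symm (π x) = Submodule.Quotient.mk x := by
      apply e.injective; rw [LinearEquiv.apply_symm_apply, he]
    show ((LinearMap.ker π).liftQ ψ' hker') (e.symm (π x)) = ψ' x
    rw [h1, Submodule.liftQ_apply]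
  have hρsingle : ∀ j, ρ (Pi.single j (1:R)) = Pi.single j (1:B) := fun j =>
    funext fun j' => by
      show algebraMap R B ((Pi.single j (1:R) : Fin n → R) j') = (Pi.single j (1:B) : Fin n → B) j'
      rcases eq_or_ne j' j with rfl | h
      · simp
      · simp [Pi.single_apply, h]
  have hφψ' : ∀ y : Fin n → B, φ (ψ' y) = π y := fun y => by
    rw [hψ'apply, map_sum]
    have : ∀ j, φ (y j • ((1:B) ⊗ₜ[R] K₀.mkQ (Pi.single j 1)))
        = y j • π (Pi.single j (1:B)) := fun j => by
      rw [map_smul]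
      congr 1
      show gbar.liftBaseChange B ((1:B) ⊗ₜ[R] K₀.mkQ (Pi.single j 1)) = _
      rw [LinearMap.liftBaseChange_tmul, one_smul]
      show g (Pi.single j (1:R)) = _
      show π (ρ (Pi.single j (1:R))) = _
      rw [hρsingle]
    simp_rw [this, ← map_smul, ← map_sum]
    congr 1
    simp_rw [hsB, Finset.univ_sum_single]
  have h1 : φ.comp ψ = LinearMap.id := by
    apply LinearMap.ext
    intro x
    obtain ⟨y, rfl⟩ := hπ x
    show φ (ψ (π y)) = π y
    rw [hψπ, hφψ']
  have h2 : ψ.comp φ = LinearMap.id := by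
    apply LinearMap.restrictScalars_injective R
    apply TensorProduct.ext'
    intro b z
    obtain ⟨x, rfl⟩ := K₀.mkQ_surjective z
    show ψ (φ (b ⊗ₜ[R] K₀.mkQ x)) = b ⊗ₜ[R] K₀.mkQ x
    have : φ (b ⊗ₜ[R] K₀.mkQ x) = b • π (ρ x) := by
      show gbar.liftBaseChange B _ = _
      rw [LinearMap.liftBaseChange_tmul]
      rfl
    rw [this, map_smul]
    have : π (ρ x) = π (ρ x) := rfl
    rw [show (π (ρ x) : E) = π (ρ x) from rfl, hψπ, hψ'ρ]
    rw [smul_tmul', smul_eq_mul, mul_one]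
  exact ⟨LinearEquiv.ofLinear φ ψ h1 h2⟩

end Aux

/-- `B`, together with the canonical maps `u i : A i →+* B`, is the direct limit
(filtered colimit) of the filtered direct system of commutative rings
`{A i, f i j : A i →+* A j (i ≤ j)}` indexed by the directed set `I`. -/
structure IsFilteredRingColimit {I : Type*} [Preorder I]
    (A : I → Type*) [∀ i, CommRing (A i)]
    (f : ∀ i j, i ≤ j → (A i →+* A j))
    (B : Type*) [CommRing B] (u : ∀ i, A i →+* B) : Prop where
  directed : ∀ i j : I, ∃ k, i ≤ k ∧ j ≤ k
  map_self : ∀ i (x : A i), f i i le_rfl x = x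
  map_map : ∀ (i j k : I) (hij : i ≤ j) (hjk : j ≤ k) (x : A i),
    f j k hjk (f i j hij x) = f i k (hij.trans hjk) x
  compat : ∀ i j (h : i ≤ j) (x : A i), u j (f i j h x) = u i x
  exhaust : ∀ b : B, ∃ (i : I) (x : A i), u i x = b
  eq_stage : ∀ i (x y : A i), u i x = u i y → ∃ (j : I) (h : i ≤ j), f i j h x = f i j h y

/-- **Reduction of finitely presented modules to a finite stage.**
Let `{A i}` be a filtered direct system of commutative rings with direct limit `B`,
with canonical homomorphisms `u i : A i →+* B`.  If `E` is a finitely presented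
`B`-module, then there exist an index `i₀` and a finitely presented `A i₀`-module
`E₀` such that the base change `B ⊗[A i₀] E₀` (along `u i₀`) is isomorphic to `E`
as a `B`-module. -/
theorem finitePresentation_module_descends_to_finite_stage
    {I : Type} [Preorder I] (A : I → Type) [∀ i, CommRing (A i)]
    (f : ∀ i j, i ≤ j → (A i →+* A j))
    (B : Type) [CommRing B] (u : ∀ i, A i →+* B)
    (hcolim : IsFilteredRingColimit A f B u)
    (E : Type) [AddCommGroup E] [Module B E] [Module.FinitePresentation B E] :
    ∃ (i₀ : I) (E₀ : Type) (_ : AddCommGroup E₀) (_ : Module (A i₀) E₀),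
      Module.FinitePresentation (A i₀) E₀ ∧
      Nonempty (letI := (u i₀).toAlgebra; (B ⊗[A i₀] E₀) ≃ₗ[B] E) := by
  classical
  obtain ⟨n, p, hp⟩ := Module.Finite.exists_fin (R := B) (M := E)
  let π : (Fin n → B) →ₗ[B] E := Fintype.linearCombination B p
  have hπ : Function.Surjective π := by
    rw [← LinearMap.range_eq_top, Fintype.range_linearCombination, hp]
  obtain ⟨s, w, hw⟩ := Submodule.fg_iff_exists_fin_generating_family.mp
    (Module.FinitePresentation.fg_ker π hπ)
  choose idx y hy using fun q : Fin s × Fin n => hcolim.exhaust (w q.1 q.2)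
  haveI : Nonempty I := ⟨(hcolim.exhaust 0).choose⟩
  haveI : IsDirected I (· ≤ ·) := ⟨hcolim.directed⟩
  obtain ⟨i₀, hi₀⟩ := (Finset.univ.image idx).exists_le
  have hle : ∀ q, idx q ≤ i₀ := fun q =>
    hi₀ _ (Finset.mem_image_of_mem _ (Finset.mem_univ q))
  let w₀ : Fin s → Fin n → A i₀ := fun k j => f (idx (k, j)) i₀ (hle (k, j)) (y (k, j))
  have hw₀ : ∀ k j, u i₀ (w₀ k j) = w k j := fun k j => by
    rw [hcolim.compat]; exact hy (k, j)
  refine ⟨i₀, (Fin n → A i₀) ⧸ Submodule.span (A i₀) (Set.range w₀),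
    inferInstance, inferInstance, ?_, ?_⟩
  · exact Module.finitePresentation_of_free_of_surjective (Submodule.span (A i₀)
      (Set.range w₀)).mkQ (Submodule.mkQ_surjective _)
      (by rw [Submodule.ker_mkQ]; exact Submodule.fg_span (Set.finite_range w₀))
  · letI := (u i₀).toAlgebra
    letI : Module (A i₀) E := Module.compHom E (u i₀)
    haveI : IsScalarTower (A i₀) B E := ⟨fun r b e => by
      show (r • b) • e = algebraMap (A i₀) B r • (b • e)
      rw [Algebra.smul_def, mul_smul]⟩
    refine aux_baseChange_quotient w₀ E π hπ ?_
    have h1 : (fun k j => algebraMap (A i₀) B (w₀ k j)) = w := by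
      funext k j
      rw [RingHom.algebraMap_toAlgebra]
      exact hw₀ k j
    rw [h1, hw]
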